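/- Let L > 0, 0 < t < 3/L, and let X be a d×d random real symmetric matrix with E[X] = 0 and X ⪯ L·I almost surely. Then E[exp(tX)] ⪯ exp((t²/2)/(1 − tL/3) · E[X²]). -/

import Mathlib

open Matrix MeasureTheory
open scoped Nat

section Helpers

lemma exp_le_quadratic_of_nonpos {y : ℝ} (hy : y ≤ 0) :
    Real.exp y ≤ 1 + y + y ^ 2 / 2 := by
  have hder : ∀ x : ℝ, deriv (fun x => 1 + x + x ^ 2 / 2 - Real.exp x) x = 1 + x - Real.exp x := by
    intro x
    have : HasDerivAt (fun x : ℝ => 1 + x + x ^ 2 / 2 - Real.exp x)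
        (0 + 1 + (2 * x ^ 1 / 2) - Real.exp x) x := by
      exact (((hasDerivAt_const x 1).add (hasDerivAt_id x)).add
        ((hasDerivAt_pow 2 x).div_const 2)).sub (Real.hasDerivAt_exp x)
    simpa using this.deriv
  have hanti : AntitoneOn (fun x : ℝ => 1 + x + x ^ 2 / 2 - Real.exp x) (Set.Iic 0) := by
    apply antitoneOn_of_deriv_nonpos (convex_Iic 0)
    · exact Continuous.continuousOn (by continuity)
    · intro x hx
      apply DifferentiableAt.differentiableWithinAt
      exact (((differentiable_const _).add differentiable_id).add
        ((differentiable_pow 2).div_const 2)).sub Real.differentiable_exp |>.differentiableAt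
    · intro x hx
      rw [hder]
      have := Real.add_one_le_exp x
      linarith
  have := hanti hy (Set.self_mem_Iic) hy
  simp at this
  linarith

lemma two_mul_three_pow_le_factorial (k : ℕ) : 2 * 3 ^ k ≤ (k + 2)! := by
  induction k with
  | zero => simp [Nat.factorial]
  | succ n ih =>
      have : (n + 3)! = (n + 3) * (n + 2)! := rfl
      calc 2 * 3 ^ (n + 1) = 3 * (2 * 3 ^ n) := by ring
      _ ≤ 3 * (n + 2)! := by omega
      _ ≤ (n + 3) * (n + 2)! := by
          have : (3:ℕ) ≤ n + 3 := by omega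
          exact Nat.mul_le_mul_right _ this
      _ = (n + 3)! := rfl

lemma exp_le_of_nonneg {c y : ℝ} (hc : c < 3) (hy0 : 0 ≤ y) (hy : y ≤ c) :
    Real.exp y ≤ 1 + y + y ^ 2 / 2 / (1 - c / 3) := by
  have hy3 : y / 3 < 1 := by linarith
  have hy3' : (0:ℝ) ≤ y / 3 := by linarith
  have hsum : Summable fun n : ℕ => y ^ n / n ! := Real.summable_pow_div_factorial y
  have hgeom : Summable fun k : ℕ => y ^ 2 / 2 * (y / 3) ^ k :=
    (summable_geometric_of_lt_one hy3' hy3).mul_left _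
  have hexp : Real.exp y = (1 + y) + ∑' k : ℕ, y ^ (k + 2) / (k + 2)! := by
    rw [Real.exp_eq_exp_ℝ, NormedSpace.exp_eq_tsum_div]
    show (∑' (n : ℕ), y ^ n / ↑n !) = _
    rw [← hsum.sum_add_tsum_nat_add 2]
    congr 1
    simp [Finset.sum_range_succ, Nat.factorial]
  have hterm : ∀ k : ℕ, y ^ (k + 2) / (k + 2)! ≤ y ^ 2 / 2 * (y / 3) ^ k := by
    intro k
    have h1 : (2 * 3 ^ k : ℝ) ≤ (k + 2)! := by
      exact_mod_cast two_mul_three_pow_le_factorial k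
    have h2 : (0:ℝ) < 2 * 3 ^ k := by positivity
    have h3 : (0:ℝ) < ((k + 2)! : ℝ) := by exact_mod_cast Nat.factorial_pos _
    have hpow : (0:ℝ) ≤ y ^ (k + 2) := by positivity
    calc y ^ (k + 2) / (k + 2)! ≤ y ^ (k + 2) / (2 * 3 ^ k) := by
          apply div_le_div_of_nonneg_left hpow h2 h1
    _ = y ^ 2 / 2 * (y / 3) ^ k := by
          rw [div_pow, pow_add]
          ring
  have htail : ∑' k : ℕ, y ^ (k + 2) / (k + 2)! ≤ y ^ 2 / 2 * (1 - y / 3)⁻¹ := by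
    calc ∑' k : ℕ, y ^ (k + 2) / (k + 2)! ≤ ∑' k : ℕ, y ^ 2 / 2 * (y / 3) ^ k := by
          apply Summable.tsum_le_tsum hterm _ hgeom
          exact (summable_nat_add_iff 2).mpr hsum
    _ = y ^ 2 / 2 * (1 - y / 3)⁻¹ := by
          rw [tsum_mul_left, tsum_geometric_of_lt_one hy3' hy3]
  have hmono : y ^ 2 / 2 * (1 - y / 3)⁻¹ ≤ y ^ 2 / 2 / (1 - c / 3) := by
    rw [div_eq_mul_inv]
    apply mul_le_mul_of_nonneg_left _ (by positivity)
    apply inv_anti₀ (by linarith) (by linarith)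
  rw [hexp]; linarith

lemma scalar_bennett {c y : ℝ} (hc0 : 0 ≤ c) (hc : c < 3) (hy : y ≤ c) :
    Real.exp y ≤ 1 + y + y ^ 2 / 2 / (1 - c / 3) := by
  rcases le_or_gt y 0 with h | h
  · have h0 := exp_le_quadratic_of_nonpos h
    have h1 : (0:ℝ) < 1 - c / 3 := by linarith
    have h2 : y ^ 2 / 2 / 1 ≤ y ^ 2 / 2 / (1 - c / 3) :=
      div_le_div_of_nonneg_left (by positivity) h1 (by linarith)
    rw [div_one] at h2
    linarith
  · exact exp_le_of_nonneg hc h.le hy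

variable {d : ℕ}

lemma spectral_real {B : Matrix (Fin d) (Fin d) ℝ} (hB : B.IsHermitian) :
    B = (hB.eigenvectorUnitary : Matrix (Fin d) (Fin d) ℝ) * diagonal hB.eigenvalues
        * star (hB.eigenvectorUnitary : Matrix (Fin d) (Fin d) ℝ) := by
  have := hB.spectral_theorem
  simpa using this

lemma conj_diag_psd {U : Matrix (Fin d) (Fin d) ℝ} {μ : Fin d → ℝ} (hμ : ∀ i, 0 ≤ μ i) :
    (U * diagonal μ * star U).PosSemidef := by
  rw [star_eq_conjTranspose]
  exact (PosSemidef.diagonal hμ).mul_mul_conjTranspose_same U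

lemma eig_le {A : Matrix (Fin d) (Fin d) ℝ} (hA : A.IsHermitian) {L : ℝ}
    (h : (L • (1 : Matrix (Fin d) (Fin d) ℝ) - A).PosSemidef) (i : Fin d) :
    hA.eigenvalues i ≤ L := by
  set v : Fin d → ℝ := ⇑(hA.eigenvectorBasis i) with hv
  have hnorm : ∑ j, v j * v j = 1 := by
    have h1 : ‖hA.eigenvectorBasis i‖ = 1 := hA.eigenvectorBasis.orthonormal.1 i
    have h2 : ‖hA.eigenvectorBasis i‖ = Real.sqrt (∑ j, ‖v j‖ ^ 2) := by
      rw [EuclideanSpace.norm_eq]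
    have h3 : Real.sqrt (∑ j, ‖v j‖ ^ 2) = 1 := h2 ▸ h1
    have h4 : ∑ j, ‖v j‖ ^ 2 = 1 := by
      have hnn : (0:ℝ) ≤ ∑ j, ‖v j‖ ^ 2 := Finset.sum_nonneg fun j _ => sq_nonneg _
      nlinarith [Real.sq_sqrt hnn, h3]
    calc ∑ j, v j * v j = ∑ j, ‖v j‖ ^ 2 := by
          apply Finset.sum_congr rfl; intro j _; rw [Real.norm_eq_abs, sq_abs]; ring
    _ = 1 := h4
  have hmv : A *ᵥ v = hA.eigenvalues i • v := hA.mulVec_eigenvectorBasis i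
  have := (posSemidef_iff_dotProduct_mulVec.mp h).2 v
  rw [sub_mulVec, smul_mulVec, one_mulVec, hmv] at this
  have hsv : star v = v := by funext j; simp
  rw [hsv, dotProduct_sub, dotProduct_smul, dotProduct_smul] at this
  have hd : dotProduct v v = 1 := hnorm
  rw [hd] at this
  simpa using this

lemma integral_psd {Ω : Type*} [MeasurableSpace Ω] (μ : Measure Ω)
    (f : Ω → Matrix (Fin d) (Fin d) ℝ)
    (hf : ∀ i j, Integrable (fun ω => f ω i j) μ)
    (hpsd : ∀ᵐ ω ∂μ, (f ω).PosSemidef) :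
    (Matrix.of fun i j => ∫ ω, f ω i j ∂μ).PosSemidef := by
  rw [posSemidef_iff_dotProduct_mulVec]
  constructor
  · ext i j
    simp only [conjTranspose_apply, of_apply, star_trivial]
    refine integral_congr_ae (hpsd.mono fun ω h => ?_)
    have := h.1
    calc f ω j i = star (f ω j i) := by simp
    _ = (f ω)ᴴ i j := rfl
    _ = f ω i j := by rw [this]
  · intro x
    have key : ∀ ω, dotProduct (star x) (f ω *ᵥ x)
        = ∑ i, ∑ j, x i * f ω i j * x j := by
      intro ω
      simp only [dotProduct, mulVec, dotProduct, Finset.mul_sum, star_trivial, Pi.star_apply]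
      congr 1; funext i; congr 1; funext j; ring
    have hq : dotProduct (star x) ((Matrix.of fun i j => ∫ ω, f ω i j ∂μ) *ᵥ x)
        = ∫ ω, ∑ i, ∑ j, x i * f ω i j * x j ∂μ := by
      rw [integral_finset_sum _ (fun i _ => integrable_finset_sum _ (fun j _ =>
        ((hf i j).const_mul (x i)).mul_const (x j)))]
      simp only [dotProduct, mulVec, dotProduct, Finset.mul_sum, star_trivial, Pi.star_apply]
      congr 1; funext i
      rw [integral_finset_sum _ (fun j _ => ((hf i j).const_mul (x i)).mul_const (x j))]
      congr 1; funext j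
      simp only [of_apply, mul_assoc]
      rw [MeasureTheory.integral_const_mul]
      congr 1
      rw [MeasureTheory.integral_mul_const]
    rw [hq]
    apply integral_nonneg_of_ae
    refine hpsd.mono fun ω h => ?_
    simp only [Pi.zero_apply]
    rw [← key ω]
    exact (posSemidef_iff_dotProduct_mulVec.mp h).2 x

lemma exp_herm_decomp {B : Matrix (Fin d) (Fin d) ℝ} (hB : B.IsHermitian) :
    NormedSpace.exp B = (hB.eigenvectorUnitary : Matrix (Fin d) (Fin d) ℝ)
        * diagonal (fun i => Real.exp (hB.eigenvalues i))
        * star (hB.eigenvectorUnitary : Matrix (Fin d) (Fin d) ℝ) := by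
  set U : Matrix (Fin d) (Fin d) ℝ := (hB.eigenvectorUnitary : Matrix (Fin d) (Fin d) ℝ)
  have hU1 : star U * U = 1 := Matrix.mem_unitaryGroup_iff'.mp hB.eigenvectorUnitary.2
  have hU2 : U * star U = 1 := Matrix.mem_unitaryGroup_iff.mp hB.eigenvectorUnitary.2
  have hinv : U⁻¹ = star U := inv_eq_left_inv hU1
  have hunit : IsUnit U := ⟨⟨U, star U, hU2, hU1⟩, rfl⟩
  conv_lhs => rw [spectral_real hB, ← hinv]
  rw [show (↑hB.eigenvectorUnitary : Matrix (Fin d) (Fin d) ℝ) = U from rfl,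
    Matrix.exp_conj U (diagonal hB.eigenvalues) hunit, Matrix.exp_diagonal, hinv]
  congr 1
  congr 1
  rw [Pi.exp_def]
  funext i
  simp [Real.exp_eq_exp_ℝ]

lemma exp_sub_one_sub_psd {B : Matrix (Fin d) (Fin d) ℝ} (hB : B.IsHermitian) :
    (NormedSpace.exp B - 1 - B).PosSemidef := by
  have hd := exp_herm_decomp hB
  have hs := spectral_real hB
  set U : Matrix (Fin d) (Fin d) ℝ := (hB.eigenvectorUnitary : Matrix (Fin d) (Fin d) ℝ) with hU
  set lam := hB.eigenvalues with hlam
  have hU2 : U * star U = 1 := Matrix.mem_unitaryGroup_iff.mp hB.eigenvectorUnitary.2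
  have h1 : (1 : Matrix (Fin d) (Fin d) ℝ) = U * diagonal (fun _ => 1) * star U := by
    rw [diagonal_one, Matrix.mul_one, hU2]
  have heq : NormedSpace.exp B - 1 - B
      = U * diagonal (fun i => Real.exp (lam i) - 1 - lam i) * star U := by
    rw [hd, h1]
    conv_lhs => rw [hs]
    rw [← Matrix.sub_mul, ← Matrix.sub_mul, ← Matrix.mul_sub, ← Matrix.mul_sub,
      diagonal_sub, diagonal_sub]
  rw [heq]
  exact conj_diag_psd fun i => by
    have := Real.add_one_le_exp (lam i); linarith

lemma key_psd {A : Matrix (Fin d) (Fin d) ℝ} (hA : A.IsHermitian) {L t : ℝ}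
    (hL : 0 < L) (ht : 0 < t) (htL : t * L < 3)
    (hb : (L • (1 : Matrix (Fin d) (Fin d) ℝ) - A).PosSemidef) :
    ((1 : Matrix (Fin d) (Fin d) ℝ) + t • A + (t ^ 2 / 2 / (1 - t * L / 3)) • (A * A)
      - NormedSpace.exp (t • A)).PosSemidef := by
  set c := t ^ 2 / 2 / (1 - t * L / 3) with hc
  set U : Matrix (Fin d) (Fin d) ℝ := (hA.eigenvectorUnitary : Matrix (Fin d) (Fin d) ℝ) with hU
  set lam := hA.eigenvalues with hlam
  have hU1 : star U * U = 1 := Matrix.mem_unitaryGroup_iff'.mp hA.eigenvectorUnitary.2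
  have hU2 : U * star U = 1 := Matrix.mem_unitaryGroup_iff.mp hA.eigenvectorUnitary.2
  have hinv : U⁻¹ = star U := inv_eq_left_inv hU1
  have hunit : IsUnit U := ⟨⟨U, star U, hU2, hU1⟩, rfl⟩
  have hAeq : A = U * diagonal lam * star U := spectral_real hA
  have h1 : (1 : Matrix (Fin d) (Fin d) ℝ) = U * diagonal (fun _ => 1) * star U := by
    rw [diagonal_one, Matrix.mul_one, hU2]
  have h2 : t • A = U * diagonal (fun i => t * lam i) * star U := by
    conv_lhs => rw [hAeq]
    rw [← Matrix.smul_mul, ← Matrix.mul_smul, ← diagonal_smul]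
    congr 2
  have h4 : c • (A * A) = U * diagonal (fun i => c * (lam i * lam i)) * star U := by
    have h3 : A * A = U * diagonal (fun i => lam i * lam i) * star U := by
      conv_lhs => rw [hAeq]
      calc U * diagonal lam * star U * (U * diagonal lam * star U)
          = U * diagonal lam * (star U * U) * diagonal lam * star U := by
            simp only [Matrix.mul_assoc]
        _ = U * (diagonal lam * diagonal lam) * star U := by
            rw [hU1, Matrix.mul_one]; simp only [Matrix.mul_assoc]
        _ = U * diagonal (fun i => lam i * lam i) * star U := by
            rw [diagonal_mul_diagonal]
    conv_lhs => rw [h3]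
    rw [← Matrix.smul_mul, ← Matrix.mul_smul, ← diagonal_smul]
    congr 2
  have h5 : NormedSpace.exp (t • A) = U * diagonal (fun i => Real.exp (t * lam i)) * star U := by
    rw [h2, ← hinv, Matrix.exp_conj U _ hunit, Matrix.exp_diagonal, hinv, Pi.exp_def]
    congr 2
    funext i
    simp [Real.exp_eq_exp_ℝ]
  have heq : (1 : Matrix (Fin d) (Fin d) ℝ) + t • A + c • (A * A) - NormedSpace.exp (t • A)
      = U * diagonal (fun i => 1 + t * lam i + c * (lam i * lam i) - Real.exp (t * lam i))
        * star U := by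
    conv_lhs => rw [h5, h1, h2, h4]
    rw [← Matrix.add_mul, ← Matrix.add_mul, ← Matrix.sub_mul,
      ← Matrix.mul_add, ← Matrix.mul_add, ← Matrix.mul_sub,
      diagonal_add, diagonal_add, diagonal_sub]
  rw [heq]
  apply conj_diag_psd
  intro i
  have hlamle : lam i ≤ L := eig_le hA hb i
  have hyle : t * lam i ≤ t * L := by nlinarith
  have hscalar := scalar_bennett (c := t * L) (y := t * lam i) (by positivity) htL hyle
  have hrw : (t * lam i) ^ 2 / 2 / (1 - t * L / 3) = c * (lam i * lam i) := by
    rw [hc]; ring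
  rw [hrw] at hscalar
  linarith

end Helpers

/-- **MGF bound (Bennett/Bernstein-type).** Let `X` be a random `d × d` real symmetric
matrix with `E[X] = 0` and `X ⪯ L·I` almost surely, and let `0 < t < 3/L`. Then
`E[exp(tX)] ⪯ exp((t²/2)/(1 − tL/3) · E[X²])`, expectations taken entrywise. -/
theorem mgf_bound_bennett {d : ℕ} {Ω : Type*} [MeasurableSpace Ω] (μ : Measure Ω)
    [IsProbabilityMeasure μ] (L t : ℝ) (hL : 0 < L) (ht : 0 < t) (htL : t < 3 / L)
    (X : Ω → Matrix (Fin d) (Fin d) ℝ)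
    (hsymm : ∀ ω, (X ω).IsHermitian)
    (hmean : (Matrix.of fun i j => ∫ ω, X ω i j ∂μ) = 0)
    (hbound : ∀ᵐ ω ∂μ, (L • (1 : Matrix (Fin d) (Fin d) ℝ) - X ω).PosSemidef)
    (hInt : ∀ i j, Integrable (fun ω => X ω i j) μ)
    (hIntSq : ∀ i j, Integrable (fun ω => (X ω * X ω) i j) μ)
    (hIntExp : ∀ i j, Integrable (fun ω => NormedSpace.exp (t • X ω) i j) μ) :
    (NormedSpace.exp ((t ^ 2 / 2 / (1 - t * L / 3)) •
          (Matrix.of fun i j => ∫ ω, (X ω * X ω) i j ∂μ))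
      - (Matrix.of fun i j => ∫ ω, NormedSpace.exp (t • X ω) i j ∂μ)).PosSemidef := by
  have htL3 : t * L < 3 := by
    rw [lt_div_iff₀ hL] at htL; linarith
  have hden : (0:ℝ) < 1 - t * L / 3 := by linarith
  set c : ℝ := t ^ 2 / 2 / (1 - t * L / 3) with hc
  have hc0 : 0 ≤ c := div_nonneg (by positivity) hden.le
  set EX2 : Matrix (Fin d) (Fin d) ℝ := Matrix.of fun i j => ∫ ω, (X ω * X ω) i j ∂μ with hEX2
  set Eexp : Matrix (Fin d) (Fin d) ℝ :=
    Matrix.of fun i j => ∫ ω, NormedSpace.exp (t • X ω) i j ∂μ with hEexp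
  have hX2herm : ∀ ω, (X ω * X ω).IsHermitian := by
    intro ω
    have h := hsymm ω
    calc (X ω * X ω)ᴴ = (X ω)ᴴ * (X ω)ᴴ := by rw [conjTranspose_mul, h]
    _ = X ω * X ω := by rw [h]
  have hEX2herm : EX2.IsHermitian := by
    ext i j
    simp only [conjTranspose_apply, hEX2, of_apply, star_trivial]
    refine integral_congr_ae (ae_of_all _ fun ω => ?_)
    calc (X ω * X ω) j i = star ((X ω * X ω) j i) := by simp
    _ = (X ω * X ω)ᴴ i j := rfl
    _ = (X ω * X ω) i j := by rw [hX2herm ω]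
  have hBherm : (c • EX2).IsHermitian := by
    show _ᴴ = _
    ext i j
    have h := congrFun (congrFun hEX2herm i) j
    simp only [conjTranspose_apply, star_trivial] at h
    simp only [conjTranspose_apply, Matrix.smul_apply, smul_eq_mul, star_trivial]
    rw [h]
  have part1 : (NormedSpace.exp (c • EX2) - 1 - c • EX2).PosSemidef :=
    exp_sub_one_sub_psd hBherm
  have hae : ∀ᵐ ω ∂μ, ((1 : Matrix (Fin d) (Fin d) ℝ) + t • X ω + c • (X ω * X ω)
      - NormedSpace.exp (t • X ω)).PosSemidef :=
    hbound.mono fun ω h => key_psd (hsymm ω) hL ht htL3 h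
  have hx : ∀ i j, ∫ ω, X ω i j ∂μ = 0 := by
    intro i j
    have := congrFun (congrFun hmean i) j
    simpa using this
  have hintall : ∀ i j, Integrable (fun ω => ((1 : Matrix (Fin d) (Fin d) ℝ) + t • X ω
      + c • (X ω * X ω) - NormedSpace.exp (t • X ω)) i j) μ := by
    intro i j
    have hfun : (fun ω => ((1 : Matrix (Fin d) (Fin d) ℝ) + t • X ω + c • (X ω * X ω)
        - NormedSpace.exp (t • X ω)) i j)
        = fun ω => (1 : Matrix (Fin d) (Fin d) ℝ) i j + t * X ω i j + c * (X ω * X ω) i j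
          - NormedSpace.exp (t • X ω) i j := by
      funext ω
      simp [Matrix.add_apply, Matrix.sub_apply, Matrix.smul_apply, smul_eq_mul]
    rw [hfun]
    exact (((integrable_const _).add ((hInt i j).const_mul t)).add
      ((hIntSq i j).const_mul c)).sub (hIntExp i j)
  have part2 := integral_psd μ _ hintall hae
  have heq : (Matrix.of fun i j => ∫ ω, ((1 : Matrix (Fin d) (Fin d) ℝ) + t • X ω
      + c • (X ω * X ω) - NormedSpace.exp (t • X ω)) i j ∂μ)
      = 1 + c • EX2 - Eexp := by
    ext i j
    simp only [of_apply]
    have hfun : ∀ ω, ((1 : Matrix (Fin d) (Fin d) ℝ) + t • X ω + c • (X ω * X ω)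
        - NormedSpace.exp (t • X ω)) i j
        = (1 : Matrix (Fin d) (Fin d) ℝ) i j + t * X ω i j + c * (X ω * X ω) i j
          - NormedSpace.exp (t • X ω) i j := by
      intro ω
      simp [Matrix.add_apply, Matrix.sub_apply, Matrix.smul_apply, smul_eq_mul]
    rw [integral_congr_ae (ae_of_all _ hfun)]
    have I1 : Integrable (fun ω => (1 : Matrix (Fin d) (Fin d) ℝ) i j + t * X ω i j) μ :=
      (integrable_const _).add ((hInt i j).const_mul t)
    have I2 : Integrable (fun ω => c * (X ω * X ω) i j) μ := (hIntSq i j).const_mul c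
    have I3 : Integrable (fun ω => (1 : Matrix (Fin d) (Fin d) ℝ) i j + t * X ω i j
        + c * (X ω * X ω) i j) μ := I1.add I2
    rw [integral_sub I3 (hIntExp i j), integral_add I1 I2,
      integral_add (integrable_const _) ((hInt i j).const_mul t),
      integral_const, MeasureTheory.integral_const_mul, MeasureTheory.integral_const_mul,
      hx i j]
    simp only [measure_univ, ENNReal.toReal_one, one_smul, mul_zero, add_zero]
    simp [Matrix.add_apply, Matrix.sub_apply, Matrix.smul_apply, smul_eq_mul, hEX2, hEexp]
  rw [heq] at part2
  have hfinal : NormedSpace.exp (c • EX2) - Eexp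
      = (NormedSpace.exp (c • EX2) - 1 - c • EX2) + (1 + c • EX2 - Eexp) := by abel
  have := part1.add part2
  rw [← hfinal] at this
  exact this
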